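/- Let M be a d×d real matrix and let n ∈ ℝ^d be a unit vector. Then the matrix-valued function C : t ↦ det(I + tM) · ‖((I + tM)⁻¹)ᵀ n‖ · (I + tM)⁻¹ ((I + tM)⁻¹)ᵀ (defined for all t small enough that I + tM is invertible) has derivative at t = 0 equal to C'(0) = (tr M − ⟨M n, n⟩) I − (M + Mᵀ). (With M = Dh(x) the Jacobian of a C¹ deformation field h at a boundary point x with unit normal n, this is the derivative of C(t) = γ_τ(t) D(T_t⁻¹) (D(T_t⁻¹))ᵀ for the perturbation T_t = Id + t h, and tr M − ⟨M n, n⟩ equals the tangential divergence div_τ h(x).) -/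

import Mathlib

open scoped RealInnerProductSpace
open Matrix

noncomputable section

/-- `C(t) = det(I + tM) · ‖((I + tM)⁻¹)ᵀ n‖ · (I + tM)⁻¹ ((I + tM)⁻¹)ᵀ`. -/
def Cmat {d : ℕ} (M : Matrix (Fin d) (Fin d) ℝ) (n : EuclideanSpace ℝ (Fin d)) (t : ℝ) :
    Matrix (Fin d) (Fin d) ℝ :=
  (((1 : Matrix (Fin d) (Fin d) ℝ) + t • M).det *
      ‖Matrix.toEuclideanLin ((((1 : Matrix (Fin d) (Fin d) ℝ) + t • M)⁻¹)ᵀ) n‖) •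
    (((1 : Matrix (Fin d) (Fin d) ℝ) + t • M)⁻¹ *
      (((1 : Matrix (Fin d) (Fin d) ℝ) + t • M)⁻¹)ᵀ)

open Polynomial

attribute [local instance] Matrix.linftyOpNormedAddCommGroup Matrix.linftyOpNormedRing
  Matrix.linftyOpNormedAlgebra

lemma hasDerivAt_inv_aux {d : ℕ} (M : Matrix (Fin d) (Fin d) ℝ) (i j : Fin d) :
    HasDerivAt (fun t : ℝ => ((1 + t • M)⁻¹ : Matrix (Fin d) (Fin d) ℝ) i j) (-M i j) 0 := by
  have hA : HasDerivAt (fun t : ℝ => (1 : Matrix (Fin d) (Fin d) ℝ) + t • M) M 0 := by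
    have := ((hasDerivAt_id (0:ℝ)).smul_const M).const_add 1
    simp only [id_eq, one_smul] at this
    exact this
  have h1 : HasDerivAt (fun t : ℝ => Ring.inverse ((1 : Matrix (Fin d) (Fin d) ℝ) + t • M))
      (-M) 0 := by
    have e : (1 : Matrix (Fin d) (Fin d) ℝ) + (0:ℝ) • M = 1 := by simp
    have hinv : HasFDerivAt (Ring.inverse (M₀ := Matrix (Fin d) (Fin d) ℝ))
        (-((ContinuousLinearMap.mulLeftRight ℝ (Matrix (Fin d) (Fin d) ℝ))
          ↑(1 : (Matrix (Fin d) (Fin d) ℝ)ˣ)⁻¹ ↑(1 : (Matrix (Fin d) (Fin d) ℝ)ˣ)⁻¹))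
        ((1 : Matrix (Fin d) (Fin d) ℝ) + (0:ℝ) • M) := by
      rw [e]; exact hasFDerivAt_ringInverse (𝕜 := ℝ) 1
    have := hinv.comp_hasDerivAt 0 hA
    exact this.congr_deriv (by simp)
  have h2 : HasDerivAt (fun t : ℝ => (((1 : Matrix (Fin d) (Fin d) ℝ) + t • M)⁻¹)) (-M) 0 := by
    simpa only [Matrix.nonsing_inv_eq_ringInverse] using h1
  -- extract entry via a continuous linear map
  let L : Matrix (Fin d) (Fin d) ℝ →ₗ[ℝ] ℝ :=
    { toFun := fun X => X i j, map_add' := fun _ _ => rfl, map_smul' := fun _ _ => rfl }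
  have := (L.toContinuousLinearMap.hasFDerivAt
    (x := (((1 : Matrix (Fin d) (Fin d) ℝ) + (0:ℝ) • M))⁻¹)).comp_hasDerivAt 0 h2
  exact this

variable {d : ℕ}

private abbrev Ainv (M : Matrix (Fin d) (Fin d) ℝ) (t : ℝ) : Matrix (Fin d) (Fin d) ℝ :=
  ((1 : Matrix (Fin d) (Fin d) ℝ) + t • M)⁻¹

lemma Ainv_zero (M : Matrix (Fin d) (Fin d) ℝ) : Ainv M 0 = 1 := by
  simp [Ainv]

lemma hasDerivAt_det (M : Matrix (Fin d) (Fin d) ℝ) :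
    HasDerivAt (fun t : ℝ => ((1 : Matrix (Fin d) (Fin d) ℝ) + t • M).det) M.trace 0 := by
  have hQeval : ∀ t : ℝ, ((1 + (X : ℝ[X]) • M.map C).det).eval t
      = ((1 : Matrix (Fin d) (Fin d) ℝ) + t • M).det := by
    intro t
    have h := RingHom.map_det (evalRingHom t) (1 + (X : ℝ[X]) • M.map C)
    simp only [RingHom.mapMatrix_apply] at h
    rw [show ((1 + (X : ℝ[X]) • M.map C).map (evalRingHom t))
        = (1 : Matrix (Fin d) (Fin d) ℝ) + t • M by
      ext i j
      by_cases hij : i = j <;>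
        simp [Matrix.map_apply, Matrix.add_apply, Matrix.one_apply, Matrix.smul_apply,
          smul_eq_mul, hij] <;> ring] at h
    simpa using h
  have hQ := Polynomial.hasDerivAt ((1 + (X : ℝ[X]) • M.map C).det) (0 : ℝ)
  rw [Matrix.derivative_det_one_add_X_smul] at hQ
  have : (fun t : ℝ => ((1 + (X : ℝ[X]) • M.map C).det).eval t)
      = fun t : ℝ => ((1 : Matrix (Fin d) (Fin d) ℝ) + t • M).det := funext hQeval
  rwa [this] at hQ


/-- Entrywise derivative at `t = 0`: `C'(0) = (tr M − ⟨M n, n⟩) I − (M + Mᵀ)`. -/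
theorem statement5 {d : ℕ} (M : Matrix (Fin d) (Fin d) ℝ)
    (n : EuclideanSpace ℝ (Fin d)) (hn : ‖n‖ = 1) (k l : Fin d) :
    HasDerivAt (fun t : ℝ => Cmat M n t k l)
      (((M.trace - ⟪Matrix.toEuclideanLin M n, n⟫) • (1 : Matrix (Fin d) (Fin d) ℝ)
          - (M + Mᵀ)) k l)
      0 := by
  classical
  have hI : ∀ i j, HasDerivAt (fun t : ℝ => Ainv M t i j) (-M i j) 0 :=
    fun i j => hasDerivAt_inv_aux M i j
  set q : ℝ → ℝ := fun t => ∑ i, (∑ j, Ainv M t j i * n j) ^ 2 with hqdef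
  have hsum0 : ∀ i, (∑ j, Ainv M 0 j i * n j) = n i := by
    intro i
    simp [Ainv_zero, Matrix.one_apply]
  have hq : HasDerivAt q
      (∑ i, ((2:ℕ) : ℝ) * (∑ j, Ainv M 0 j i * n j) ^ 1 * (∑ j, -M j i * n j)) 0 := by
    apply HasDerivAt.fun_sum
    intro i _
    exact (HasDerivAt.fun_sum fun j _ => (hI j i).mul_const (n j)).pow 2
  have hq0 : q 0 = 1 := by
    have h1 : ⟪n, n⟫ = ∑ i, n i * n i := by
      simp only [PiLp.inner_apply, RCLike.inner_apply, conj_trivial]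
    have h2 : ⟪n, n⟫ = (1:ℝ) := by
      rw [real_inner_self_eq_norm_sq, hn]; norm_num
    simp only [hqdef, hsum0, sq]
    rw [← h1, h2]
  have hS : ⟪Matrix.toEuclideanLin M n, n⟫ = ∑ i, (∑ j, M i j * n j) * n i := by
    simp [PiLp.inner_apply, RCLike.inner_apply, Matrix.toEuclideanLin_apply, Matrix.mulVec,
      dotProduct]
    exact Finset.sum_congr rfl fun i _ => mul_comm _ _
  have key : ∑ i, n i * ∑ j, M j i * n j = ∑ i, (∑ j, M i j * n j) * n i := by
    simp_rw [Finset.mul_sum, Finset.sum_mul]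
    rw [Finset.sum_comm]
    exact Finset.sum_congr rfl fun i _ => Finset.sum_congr rfl fun j _ => by ring
  have h2 : ∑ i, 2 * n i * (∑ j, M j i * n j) = 2 * ∑ i, n i * ∑ j, M j i * n j := by
    rw [Finset.mul_sum]
    exact Finset.sum_congr rfl fun i _ => by ring
  have hq' : (∑ i, ((2:ℕ) : ℝ) * (∑ j, Ainv M 0 j i * n j) ^ 1 * (∑ j, -M j i * n j))
      = -2 * ⟪Matrix.toEuclideanLin M n, n⟫ := by
    calc (∑ i, ((2:ℕ) : ℝ) * (∑ j, Ainv M 0 j i * n j) ^ 1 * (∑ j, -M j i * n j))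
        = ∑ i, -(2 * n i * (∑ j, M j i * n j)) := by
          refine Finset.sum_congr rfl fun i _ => ?_
          rw [hsum0, pow_one, show (∑ j, -M j i * n j) = -(∑ j, M j i * n j) by
            simp [neg_mul, Finset.sum_neg_distrib]]
          push_cast
          ring
      _ = -(2 * ∑ i, n i * ∑ j, M j i * n j) := by rw [Finset.sum_neg_distrib, h2]
      _ = -2 * ⟪Matrix.toEuclideanLin M n, n⟫ := by rw [hS, ← key]; ring
  have hnorm : ∀ t : ℝ, ‖Matrix.toEuclideanLin ((Ainv M t)ᵀ) n‖ = Real.sqrt (q t) := by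
    intro t
    rw [EuclideanSpace.norm_eq]
    congr 1
    refine Finset.sum_congr rfl fun i _ => ?_
    rw [Real.norm_eq_abs, sq_abs]
    congr 1
  have hg : HasDerivAt (fun t => Real.sqrt (q t))
      ((1 / (2 * Real.sqrt (q 0))) *
        (∑ i, ((2:ℕ) : ℝ) * (∑ j, Ainv M 0 j i * n j) ^ 1 * (∑ j, -M j i * n j))) 0 := by
    exact (Real.hasDerivAt_sqrt (by rw [hq0]; norm_num)).comp 0 hq
  have hprod : HasDerivAt (fun t : ℝ => ∑ j, Ainv M t k j * Ainv M t l j)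
      (∑ j, (-M k j * Ainv M 0 l j + Ainv M 0 k j * -M l j)) 0 :=
    HasDerivAt.fun_sum fun j _ => (hI k j).mul (hI l j)
  have hδ : (∑ j, Ainv M 0 k j * Ainv M 0 l j) = (1 : Matrix (Fin d) (Fin d) ℝ) k l := by
    simp [Ainv_zero, Matrix.one_apply]
  have hE : (∑ j, (-M k j * Ainv M 0 l j + Ainv M 0 k j * -M l j)) = -M k l - M l k := by
    rw [sub_eq_add_neg]
    simp [Ainv_zero, Matrix.one_apply, mul_ite, ite_mul, Finset.sum_add_distrib]
  have hC : (fun t : ℝ => Cmat M n t k l)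
      = fun t : ℝ => (((1 : Matrix (Fin d) (Fin d) ℝ) + t • M).det * Real.sqrt (q t)) *
          (∑ j, Ainv M t k j * Ainv M t l j) := by
    funext t
    simp only [Cmat, Matrix.smul_apply, Matrix.mul_apply, Matrix.transpose_apply, smul_eq_mul,
      hnorm t]
  rw [hC]
  have H := ((hasDerivAt_det M).mul hg).mul hprod
  refine H.congr_deriv ?_
  rw [hδ, hE, hq', hq0, Real.sqrt_one]
  simp only [Matrix.sub_apply, Matrix.smul_apply, Matrix.add_apply, Matrix.transpose_apply,
    smul_eq_mul, Ainv_zero, zero_smul, add_zero, Matrix.det_one, Pi.mul_apply, hq0, Real.sqrt_one]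
  ring
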